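/- arXiv:2509.05516 — 2 statements merged into one kernel-verified Lean document; each statement's English description precedes it below -/
import Mathlib

section
/- Let λ = (λ_1, …, λ_ℓ) be a partition and r ≥ 0 an integer, with K a field of characteristic zero. If r < |λ| and λ ≠ ∅, then for every n the Σ_n-coinvariants of Res^{Σ_{n+r}}_{Σ_n} V_{λ⟨n+r⟩} vanish, where V_{λ⟨n+r⟩} is the irreducible Σ_{n+r}-representation associated to the padded partition λ⟨n+r⟩ = (n+r−|λ|, λ_1, …, λ_ℓ) whenever n+r ≥ |λ| + λ_1. -/
open Module
open scoped Classical

/-- The submodule of `G`-equivariant linear maps between two representations. -/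
def equivariantMaps {K G V W : Type*} [CommSemiring K] [Monoid G]
    [AddCommMonoid V] [Module K V] [AddCommMonoid W] [Module K W]
    (ρ : Representation K G V) (τ : Representation K G W) :
    Submodule K (V →ₗ[K] W) where
  carrier := {f | ∀ g v, f (ρ g v) = τ g (f v)}
  add_mem' := by intro f h hf hh g v; simp [hf g v, hh g v]
  zero_mem' := by intro g v; simp
  smul_mem' := by intro a f hf g v; simp [hf g v]

/-- The standard inclusion `Σ_m → Σ_n` (as permutations fixing the last `n - m` letters). -/
noncomputable def permIncl (m n : ℕ) (h : m ≤ n) :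
    Equiv.Perm (Fin m) →* Equiv.Perm (Fin n) :=
  Equiv.Perm.viaEmbeddingHom (Fin.castLEEmb h)

/-- The restriction of a representation of `Σ_n` to `Σ_m ≤ Σ_n`. -/
noncomputable def resPerm {K V : Type*} [CommSemiring K] [AddCommMonoid V] [Module K V]
    {n : ℕ} (m : ℕ) (h : m ≤ n) (ρ : Representation K (Equiv.Perm (Fin n)) V) :
    Representation K (Equiv.Perm (Fin m)) V :=
  ρ.comp (permIncl m n h)

/-- The augmentation submodule of a representation: the span of the elements `g • v - v`. -/
def coinvariantsKer {K G V : Type*} [CommRing K] [Monoid G] [AddCommGroup V] [Module K V]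
    (ρ : Representation K G V) : Submodule K V :=
  Submodule.span K {x | ∃ g v, ρ g v - v = x}

/-- The coinvariants (`H_0`) of a representation. -/
abbrev coinvariants {K G V : Type*} [CommRing K] [Monoid G] [AddCommGroup V] [Module K V]
    (ρ : Representation K G V) := V ⧸ coinvariantsKer ρ

/-- The one-row Young diagram `(m)`. -/
def rowDiagram (m : ℕ) : YoungDiagram :=
  YoungDiagram.ofRowLens [m] (List.pairwise_singleton _ m).sortedGE

/-- The padded Young diagram `λ⟨m⟩ = (m − |λ|, λ_1, …, λ_ℓ)`, defined when `m ≥ |λ| + λ_1`. -/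
def padDiagram (μ : YoungDiagram) (m : ℕ) (h : μ.card + μ.rowLen 0 ≤ m) : YoungDiagram :=
  YoungDiagram.ofRowLens ((m - μ.card) :: μ.rowLens) (by
    refine List.Pairwise.sortedGE (List.pairwise_cons.mpr ⟨?_, μ.rowLens_sorted.pairwise⟩)
    intro b hb
    obtain ⟨i, _, rfl⟩ := List.mem_map.mp hb
    exact le_trans (μ.rowLen_anti 0 i (Nat.zero_le i)) (by omega))

/-- A bundle of data pinning down the irreducible representations `V_μ` of the symmetric groups
over a field `K` of characteristic zero, indexed by Young diagrams `μ` (with `V_μ` a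
representation of `Σ_{|μ|}`): each `V_μ` is absolutely irreducible, the diagrams with one row
index the trivial representations, the branching rule holds, different diagrams give
non-isomorphic representations, and every irreducible representation of `Σ_m` occurs. -/
structure SpechtFamily (K : Type) [Field K] : Type 1 where
  W : YoungDiagram → Type
  acg : ∀ μ, AddCommGroup (W μ)
  mod : ∀ μ, Module K (W μ)
  fd : ∀ μ, FiniteDimensional K (W μ)
  ρ : ∀ (m : ℕ) (μ : YoungDiagram), Representation K (Equiv.Perm (Fin m)) (W μ)
  nontriv : ∀ μ, Nontrivial (W μ)
  irr : ∀ (m : ℕ) (μ : YoungDiagram), μ.card = m →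
    ∀ p : Submodule K (W μ), (∀ g x, x ∈ p → ρ m μ g x ∈ p) → p = ⊥ ∨ p = ⊤
  schur : ∀ (m : ℕ) (μ : YoungDiagram), μ.card = m →
    finrank K (equivariantMaps (ρ m μ) (ρ m μ)) = 1
  hom_ne : ∀ (m : ℕ) (μ ν : YoungDiagram), μ.card = m → ν.card = m → μ ≠ ν →
    finrank K (equivariantMaps (ρ m μ) (ρ m ν)) = 0
  row_trivial : ∀ (m : ℕ) (g : Equiv.Perm (Fin m)), ρ m (rowDiagram m) g = LinearMap.id
  branching : ∀ (m : ℕ) (μ ν : YoungDiagram), μ.card = m → ν.card = m + 1 →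
    finrank K (equivariantMaps (ρ m μ) (resPerm m (Nat.le_succ m) (ρ (m + 1) ν))) =
      if μ ≤ ν then 1 else 0
  complete : ∀ (m : ℕ) (V : Type) [AddCommGroup V] [Module K V] [FiniteDimensional K V]
    (τ : Representation K (Equiv.Perm (Fin m)) V), Nontrivial V →
    (∀ p : Submodule K V, (∀ g x, x ∈ p → τ g x ∈ p) → p = ⊥ ∨ p = ⊤) →
    ∃ μ : YoungDiagram, μ.card = m ∧
      ∃ e : V ≃ₗ[K] W μ, ∀ g x, e (τ g x) = ρ m μ g (e x)

attribute [instance] SpechtFamily.acg SpechtFamily.mod SpechtFamily.fd SpechtFamily.nontriv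

section AuxLemmas

variable {K : Type} [Field K] [CharZero K]

lemma mem_range_castLEEmb {a b : ℕ} (h : a ≤ b) (x : Fin b) :
    x ∈ Set.range (Fin.castLEEmb h) ↔ (x : ℕ) < a := by
  constructor
  · rintro ⟨y, rfl⟩; exact y.2
  · intro hx; exact ⟨⟨x, hx⟩, by ext; rfl⟩

lemma permIncl_trans {a b c : ℕ} (hab : a ≤ b) (hbc : b ≤ c) (σ : Equiv.Perm (Fin a)) :
    permIncl b c hbc (permIncl a b hab σ) = permIncl a c (hab.trans hbc) σ := by
  ext x
  simp only [permIncl, Equiv.Perm.viaEmbeddingHom_apply]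
  by_cases h1 : (x : ℕ) < a
  · have hx : x = Fin.castLEEmb hbc (Fin.castLEEmb hab ⟨(x : ℕ), h1⟩) := by ext; rfl
    rw [hx, Equiv.Perm.viaEmbedding_apply, Equiv.Perm.viaEmbedding_apply]
    have key : ∀ y : Fin a, (Fin.castLEEmb hbc) ((Fin.castLEEmb hab) y)
        = Fin.castLEEmb (hab.trans hbc) y := fun y => rfl
    rw [key, key, Equiv.Perm.viaEmbedding_apply]
  · by_cases h2 : (x : ℕ) < b
    · have hx : x = Fin.castLEEmb hbc ⟨(x : ℕ), h2⟩ := by ext; rfl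
      rw [hx, Equiv.Perm.viaEmbedding_apply,
        Equiv.Perm.viaEmbedding_apply_of_notMem _ _ _ (by
          rw [mem_range_castLEEmb]; simpa using h1),
        Equiv.Perm.viaEmbedding_apply_of_notMem _ _ _ (by
          rw [mem_range_castLEEmb]; simpa using h1)]
    · rw [Equiv.Perm.viaEmbedding_apply_of_notMem _ _ _ (by
          rw [mem_range_castLEEmb]; exact h2),
        Equiv.Perm.viaEmbedding_apply_of_notMem _ _ _ (by
          rw [mem_range_castLEEmb]; omega)]

lemma permIncl_self {n : ℕ} (h : n ≤ n) (σ : Equiv.Perm (Fin n)) :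
    permIncl n n h σ = σ := by
  ext x
  simp only [permIncl, Equiv.Perm.viaEmbeddingHom_apply]
  have hx : x = Fin.castLEEmb h x := by ext; rfl
  rw [hx, Equiv.Perm.viaEmbedding_apply]
  rfl

omit [CharZero K] in
lemma resPerm_apply {V : Type*} [AddCommGroup V] [Module K V] {n m : ℕ} (h : m ≤ n)
    (ρ : Representation K (Equiv.Perm (Fin n)) V) (g : Equiv.Perm (Fin m)) :
    resPerm m h ρ g = ρ (permIncl m n h g) := rfl

lemma card_cellsOfRowLens (w : List ℕ) : (YoungDiagram.cellsOfRowLens w).card = w.sum := by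
  induction w with
  | nil => simp [YoungDiagram.cellsOfRowLens]
  | cons a t ih =>
    rw [YoungDiagram.cellsOfRowLens, Finset.card_union_of_disjoint, Finset.card_map, ih]
    · simp [List.sum_cons]
    · rw [Finset.disjoint_left]
      rintro ⟨i, j⟩ hm hm2
      simp only [Finset.mem_product, Finset.mem_singleton] at hm
      simp only [Finset.mem_map, Function.Embedding.prodMap] at hm2
      obtain ⟨⟨i', j'⟩, _, heq⟩ := hm2
      have : i'.succ = i := congrArg Prod.fst heq
      omega

lemma card_ofRowLens (w : List ℕ) (hw : w.SortedGE) :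
    (YoungDiagram.ofRowLens w hw).card = w.sum := card_cellsOfRowLens w

lemma sum_rowLens (μ : YoungDiagram) : μ.rowLens.sum = μ.card := by
  conv_rhs => rw [← YoungDiagram.ofRowLens_to_rowLens_eq_self (μ := μ)]
  exact (card_ofRowLens _ _).symm

lemma card_padDiagram (μ : YoungDiagram) (m : ℕ) (h : μ.card + μ.rowLen 0 ≤ m) :
    (padDiagram μ m h).card = m := by
  rw [padDiagram, card_ofRowLens, List.sum_cons, sum_rowLens]
  omega

lemma rowLen_padDiagram (μ : YoungDiagram) (m : ℕ) (h : μ.card + μ.rowLen 0 ≤ m) :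
    (padDiagram μ m h).rowLen 0 = m - μ.card := by
  have := YoungDiagram.rowLen_ofRowLens
    (w := (m - μ.card) :: μ.rowLens) (hw := by
      refine List.Pairwise.sortedGE (List.pairwise_cons.mpr ⟨?_, μ.rowLens_sorted.pairwise⟩)
      intro b hb
      obtain ⟨i, _, rfl⟩ := List.mem_map.mp hb
      exact le_trans (μ.rowLen_anti 0 i (Nat.zero_le i)) (by omega))
    ⟨0, by simp⟩
  exact this

lemma card_rowDiagram (m : ℕ) : (rowDiagram m).card = m := by
  rw [rowDiagram, card_ofRowLens]; simp

lemma rowLen_rowDiagram (m : ℕ) : (rowDiagram m).rowLen 0 = m :=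
  YoungDiagram.rowLen_ofRowLens (w := [m]) ⟨0, by simp⟩

lemma rowLen_le_of_le {μ ν : YoungDiagram} (h : μ ≤ ν) (i : ℕ) :
    μ.rowLen i ≤ ν.rowLen i := by
  rcases Nat.eq_zero_or_pos (μ.rowLen i) with h0 | h0
  · omega
  · have : (i, μ.rowLen i - 1) ∈ μ := YoungDiagram.mem_iff_lt_rowLen.mpr (by omega)
    have hν : (i, μ.rowLen i - 1) ∈ ν := YoungDiagram.cells_subset_iff.mpr h this
    have := YoungDiagram.mem_iff_lt_rowLen.mp hν
    omega

section avg
variable {V G : Type*} [AddCommGroup V] [Module K V] [Group G] [Fintype G]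

lemma exists_equivariant_proj (τ : Representation K G V) (q : Submodule K V)
    (hq : ∀ g x, x ∈ q → τ g x ∈ q) :
    ∃ π : V →ₗ[K] V, (∀ g x, π (τ g x) = τ g (π x)) ∧ (∀ x, π x ∈ q) ∧ (∀ x ∈ q, π x = x) := by
  obtain ⟨c, hc⟩ := Submodule.exists_isCompl q
  set π₀ : V →ₗ[K] V := q.subtype ∘ₗ (q.projectionOnto c hc) with hπ₀
  have hπ₀mem : ∀ x, π₀ x ∈ q := fun x => (q.projectionOnto c hc x).2
  have hπ₀id : ∀ x ∈ q, π₀ x = x := by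
    intro x hx
    have := Submodule.linearProjOfIsCompl_apply_left hc ⟨x, hx⟩
    simp only [hπ₀, LinearMap.comp_apply, Submodule.coe_subtype]
    rw [show x = ((⟨x, hx⟩ : q) : V) from rfl, this]
  have hcard : ((Fintype.card G : K)) ≠ 0 := by
    exact_mod_cast Nat.cast_ne_zero.mpr Fintype.card_ne_zero
  set π : V →ₗ[K] V :=
    (Fintype.card G : K)⁻¹ • ∑ g : G, (τ g⁻¹) ∘ₗ π₀ ∘ₗ (τ g) with hπ
  have hπapp : ∀ x, π x = (Fintype.card G : K)⁻¹ • ∑ g : G, τ g⁻¹ (π₀ (τ g x)) := by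
    intro x
    simp [hπ, LinearMap.sum_apply]
  have hτinv : ∀ (g : G) (x : V), τ g⁻¹ (τ g x) = x := by
    intro g x
    have : τ g⁻¹ * τ g = 1 := by rw [← map_mul, inv_mul_cancel, map_one]
    calc τ g⁻¹ (τ g x) = (τ g⁻¹ * τ g) x := rfl
    _ = x := by rw [this]; rfl
  refine ⟨π, ?_, ?_, ?_⟩
  · intro h x
    rw [hπapp, hπapp]
    rw [show τ h ((Fintype.card G : K)⁻¹ • ∑ g : G, τ g⁻¹ (π₀ (τ g x)))
      = (Fintype.card G : K)⁻¹ • ∑ g : G, τ h (τ g⁻¹ (π₀ (τ g x))) by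
        rw [map_smul, map_sum]]
    congr 1
    refine Fintype.sum_equiv (Equiv.mulRight h⁻¹).symm _ _ ?_
    intro g
    have e1 : τ g⁻¹ (π₀ (τ g (τ h x))) = τ g⁻¹ (π₀ (τ (g * h) x)) := by
      rw [show τ g (τ h x) = τ (g * h) x by rw [map_mul]; rfl]
    rw [e1]
    have e3 : (Equiv.mulRight h⁻¹).symm g = g * h := by simp
    rw [e3]
    have e4 : ∀ y, τ h (τ (g*h)⁻¹ y) = τ g⁻¹ y := by
      intro y
      rw [show τ g⁻¹ = τ (h * (g*h)⁻¹) by rw [show h * (g*h)⁻¹ = g⁻¹ by group], map_mul]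
      rfl
    rw [e4]
  · intro x
    rw [hπapp]
    exact Submodule.smul_mem _ _ (Submodule.sum_mem _ fun g _ =>
      hq g⁻¹ _ (hπ₀mem _))
  · intro x hx
    rw [hπapp]
    have : ∀ g : G, τ g⁻¹ (π₀ (τ g x)) = x := fun g => by
      rw [hπ₀id _ (hq g x hx), hτinv]
    simp only [this, Finset.sum_const, Finset.card_univ]
    rw [← Nat.cast_smul_eq_nsmul K, smul_smul, inv_mul_cancel₀ hcard, one_smul]

end avg

end AuxLemmas
section Main

variable {K : Type} [Field K] [CharZero K]

set_option maxHeartbeats 1000000 in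
lemma no_invariants (F : SpechtFamily K) :
    ∀ (r n : ℕ) (ν : YoungDiagram), ν.card = n + r → r + ν.rowLen 0 < ν.card →
    ∀ v : F.W ν,
      (∀ g : Equiv.Perm (Fin n), resPerm n (Nat.le_add_right n r) (F.ρ (n + r) ν) g v = v) →
      v = 0 := by
  intro r
  induction r with
  | zero =>
    intro n ν hc hlt v hv
    -- invariance under all of Σ_n
    have hinv : ∀ g : Equiv.Perm (Fin n), F.ρ n ν g v = v := by
      intro g
      have := hv g
      rw [resPerm_apply] at this
      rwa [show permIncl n (n+0) (Nat.le_add_right n 0) g = g from permIncl_self _ g] at this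
    -- the invariants submodule
    set p : Submodule K (F.W ν) := ⨅ g : Equiv.Perm (Fin n),
      LinearMap.eqLocus (F.ρ n ν g) LinearMap.id with hp
    have hmemp : ∀ x : F.W ν, x ∈ p ↔ ∀ g, F.ρ n ν g x = x := by
      intro x
      simp [hp, Submodule.mem_iInf, LinearMap.mem_eqLocus]
    have hstab : ∀ g x, x ∈ p → F.ρ n ν g x ∈ p := by
      intro g x hx
      rw [hmemp] at hx ⊢
      rw [hx g]; exact hx
    rcases F.irr n ν hc p hstab with hbot | htop
    · have : v ∈ p := (hmemp v).mpr hinv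
      rw [hbot] at this
      simpa using this
    · -- action is trivial; derive a contradiction with hom_ne
      exfalso
      have htriv : ∀ g x, F.ρ n ν g x = x := by
        intro g x
        exact (hmemp x).mp (htop ▸ Submodule.mem_top) g
      have hne : ν ≠ rowDiagram n := by
        intro hEq
        have h1 : ν.rowLen 0 = n := by rw [hEq, rowLen_rowDiagram]
        omega
      have hzero := F.hom_ne n ν (rowDiagram n) hc (card_rowDiagram n) hne
      -- construct a nonzero equivariant map
      obtain ⟨x, hx⟩ := exists_ne (0 : F.W ν)
      obtain ⟨w, hw⟩ := exists_ne (0 : F.W (rowDiagram n))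
      have : ¬ (∀ φ : Module.Dual K (F.W ν), φ x = 0) := by
        rw [Module.forall_dual_apply_eq_zero_iff]; exact hx
      push_neg at this
      obtain ⟨φ, hφ⟩ := this
      set f : F.W ν →ₗ[K] F.W (rowDiagram n) := φ.smulRight w with hf
      have hfmem : f ∈ equivariantMaps (F.ρ n ν) (F.ρ n (rowDiagram n)) := by
        intro g y
        rw [htriv, F.row_trivial]
        rfl
      have hfne : f ≠ 0 := by
        intro h0
        have : f x = 0 := by rw [h0]; rfl
        rw [hf] at this
        simp only [LinearMap.smulRight_apply] at this
        exact (smul_ne_zero hφ hw) this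
      have : Nontrivial (equivariantMaps (F.ρ n ν) (F.ρ n (rowDiagram n))) :=
        ⟨⟨f, hfmem⟩, 0, by simp [Subtype.ext_iff, hfne]⟩
      have hpos : 0 < Module.finrank K (equivariantMaps (F.ρ n ν) (F.ρ n (rowDiagram n))) :=
        Module.finrank_pos
      omega
  | succ s IH =>
    intro n ν hc hlt v hv
    set m := n + s with hm
    set τ : Representation K (Equiv.Perm (Fin m)) (F.W ν) :=
      resPerm m (Nat.le_succ m) (F.ρ (m + 1) ν) with hτ
    set u : Equiv.Perm (Fin n) → Equiv.Perm (Fin m) :=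
      fun g => permIncl n m (Nat.le_add_right n s) g with hu
    have hvinv : ∀ g : Equiv.Perm (Fin n), τ (u g) v = v := by
      intro g
      have := hv g
      rw [resPerm_apply] at this
      rw [hτ, resPerm_apply, hu, permIncl_trans]
      exact this
    -- inner induction on the dimension of a stable submodule containing v
    suffices claim : ∀ d : ℕ, ∀ p : Submodule K (F.W ν), Module.finrank K p ≤ d →
        (∀ g x, x ∈ p → τ g x ∈ p) → ∀ w ∈ p,
        (∀ g : Equiv.Perm (Fin n), τ (u g) w = w) → w = 0 by
      exact claim (Module.finrank K (F.W ν)) ⊤ (le_of_eq (finrank_top K (F.W ν))) (fun _ _ _ =>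
        Submodule.mem_top) v Submodule.mem_top hvinv
    intro d
    induction d with
    | zero =>
      intro p hd _ w hwp _
      have : p = ⊥ := Submodule.finrank_eq_zero.mp (Nat.le_zero.mp hd)
      rw [this] at hwp
      simpa using hwp
    | succ d IHd =>
      intro p hd hstab w hwp hwinv
      by_cases hex : ∃ q : Submodule K (F.W ν),
          (∀ g x, x ∈ q → τ g x ∈ q) ∧ ⊥ < q ∧ q < p
      · obtain ⟨q, hqstab, hqbot, hqp⟩ := hex
        obtain ⟨π, hπequiv, hπmem, hπid⟩ := exists_equivariant_proj τ q hqstab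
        have ha : π w = 0 := by
          refine IHd q ?_ hqstab (π w) (hπmem w) ?_
          · have h1 : Module.finrank K q < Module.finrank K p :=
              Submodule.finrank_lt_finrank_of_lt hqp
            omega
          · intro g
            rw [← hπequiv, hwinv]
        -- now w ∈ p ⊓ ker π
        have hker : ∀ g x, x ∈ (p ⊓ LinearMap.ker π) → τ g x ∈ (p ⊓ LinearMap.ker π) := by
          intro g x hx
          obtain ⟨hx1, hx2⟩ := Submodule.mem_inf.mp hx
          refine Submodule.mem_inf.mpr ⟨hstab g x hx1, ?_⟩
          rw [LinearMap.mem_ker] at hx2 ⊢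
          rw [hπequiv, hx2, map_zero]
        have hlt2 : p ⊓ LinearMap.ker π < p := by
          refine lt_of_le_of_ne inf_le_left ?_
          intro hEq
          have hple : p ≤ LinearMap.ker π := inf_eq_left.mp hEq
          have hqb : q = ⊥ := by
            rw [eq_bot_iff]
            intro x hxq
            have h0 : π x = 0 := LinearMap.mem_ker.mp (hple (hqp.le hxq))
            have h1 : π x = x := hπid x hxq
            rw [Submodule.mem_bot, ← h1, h0]
          exact hqbot.ne' hqb
        refine IHd (p ⊓ LinearMap.ker π) ?_ hker w
          (Submodule.mem_inf.mpr ⟨hwp, LinearMap.mem_ker.mpr ha⟩) hwinv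
        have := Submodule.finrank_lt_finrank_of_lt hlt2
        omega
      · -- p is irreducible (or small); handle via complete + branching
        by_cases hw0 : w = 0
        · exact hw0
        have hptriv : Nontrivial p := ⟨⟨w, hwp⟩, 0, by simp [Subtype.ext_iff, hw0]⟩
        have hstab' : ∀ g : Equiv.Perm (Fin m), ∀ x ∈ p, τ g x ∈ p :=
          fun g x hx => hstab g x hx
        set τp : Representation K (Equiv.Perm (Fin m)) p :=
          { toFun := fun g => (τ g).restrict (hstab' g)
            map_one' := by
              refine LinearMap.ext fun x => Subtype.ext ?_
              simp [LinearMap.restrict_apply]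
            map_mul' := by
              intro g h
              refine LinearMap.ext fun x => Subtype.ext ?_
              simp [LinearMap.restrict_apply, Module.End.mul_apply, map_mul] } with hτp
        have hτpapply : ∀ (g : Equiv.Perm (Fin m)) (x : p),
            (τp g x : F.W ν) = τ g (x : F.W ν) := by
          intro g x
          rfl
        have hirr : ∀ p' : Submodule K p, (∀ g x, x ∈ p' → τp g x ∈ p') → p' = ⊥ ∨ p' = ⊤ := by
          intro p' hp'
          set q := p'.map p.subtype with hq
          have hqle : q ≤ p := Submodule.map_subtype_le p p'
          have hqstab : ∀ g x, x ∈ q → τ g x ∈ q := by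
            intro g x hx
            obtain ⟨y, hy, rfl⟩ := Submodule.mem_map.mp hx
            exact Submodule.mem_map.mpr ⟨τp g y, hp' g y hy, (hτpapply g y).symm ▸ rfl⟩
          have hno : ¬ ((∀ g x, x ∈ q → τ g x ∈ q) ∧ ⊥ < q ∧ q < p) := fun hcon => hex ⟨q, hcon⟩
          have hcase : q = ⊥ ∨ q = p := by
            by_contra hcon
            push_neg at hcon
            exact hno ⟨hqstab, bot_lt_iff_ne_bot.mpr hcon.1, lt_of_le_of_ne hqle hcon.2⟩
          have hinj := Submodule.injective_subtype p
          rcases hcase with h0 | h0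
          · left
            exact Submodule.map_injective_of_injective hinj
              (by rw [← hq, h0, Submodule.map_bot])
          · right
            exact Submodule.map_injective_of_injective hinj
              (by rw [← hq, h0, Submodule.map_subtype_top])
        obtain ⟨μ, hμcard, e, he⟩ := F.complete m p τp hptriv hirr
        set f0 : F.W μ →ₗ[K] F.W ν := p.subtype ∘ₗ (e.symm : F.W μ →ₗ[K] p) with hf0
        have hf0apply : ∀ x : F.W μ, f0 x = ((e.symm x : p) : F.W ν) := fun x => rfl
        have hf0mem : f0 ∈ equivariantMaps (F.ρ m μ)
            (resPerm m (Nat.le_succ m) (F.ρ (m + 1) ν)) := by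
          intro g x
          have h1 : F.ρ m μ g x = e (τp g (e.symm x)) := by
            rw [he g (e.symm x), LinearEquiv.apply_symm_apply]
          rw [hf0apply, hf0apply, h1, LinearEquiv.symm_apply_apply, hτpapply]
        have hf0ne : f0 ≠ 0 := by
          intro h0
          have : f0 (e ⟨w, hwp⟩) = w := by
            rw [hf0apply, LinearEquiv.symm_apply_apply]
          rw [h0] at this
          exact hw0 (by simpa using this.symm)
        have hnt : Nontrivial (equivariantMaps (F.ρ m μ)
            (resPerm m (Nat.le_succ m) (F.ρ (m + 1) ν))) :=
          ⟨⟨f0, hf0mem⟩, 0, by simp [Subtype.ext_iff, hf0ne]⟩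
        have hpos : 0 < Module.finrank K (equivariantMaps (F.ρ m μ)
            (resPerm m (Nat.le_succ m) (F.ρ (m + 1) ν))) := Module.finrank_pos
        have hbr := F.branching m μ ν hμcard (by omega)
        have hle : μ ≤ ν := by
          by_contra hcon
          rw [if_neg hcon] at hbr
          omega
        -- apply the outer induction hypothesis
        have hrl := rowLen_le_of_le hle 0
        have hwμ : e ⟨w, hwp⟩ = 0 := by
          refine IH n μ hμcard (by omega) (e ⟨w, hwp⟩) ?_
          intro g
          rw [resPerm_apply]
          have h1 : F.ρ (n + s) μ (permIncl n (n + s) (Nat.le_add_right n s) g) (e ⟨w, hwp⟩)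
              = e (τp (u g) ⟨w, hwp⟩) := (he (u g) ⟨w, hwp⟩).symm
          rw [h1]
          congr 1
          exact Subtype.ext (by rw [hτpapply]; exact hwinv g)
        exact absurd (congrArg Subtype.val ((LinearEquiv.map_eq_zero_iff e).mp hwμ)) hw0

end Main
/-- Let `λ` be a partition, `r ≥ 0`, and `K` a field of characteristic zero.
If `r < |λ|` and `λ ≠ ∅`, then for every `n` (with `n + r ≥ |λ| + λ_1`, so that the padded
partition is defined) the `Σ_n`-coinvariants of `Res^{Σ_{n+r}}_{Σ_n} V_{λ⟨n+r⟩}` vanish, where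
`V_{λ⟨n+r⟩}` is the irreducible `Σ_{n+r}`-representation associated to the padded partition
`λ⟨n+r⟩ = (n+r−|λ|, λ_1, …, λ_ℓ)`. -/
theorem coinvariants_of_res_padded_vanish
    (K : Type) [Field K] [CharZero K] (F : SpechtFamily K)
    (lam : YoungDiagram) (hlam : lam.card ≠ 0)
    (r n : ℕ) (hr : r < lam.card)
    (h : lam.card + lam.rowLen 0 ≤ n + r) :
    Subsingleton (coinvariants
      (resPerm n (Nat.le_add_right n r) (F.ρ (n + r) (padDiagram lam (n + r) h)))) := by
  set ν := padDiagram lam (n + r) h with hν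
  set σ := resPerm n (Nat.le_add_right n r) (F.ρ (n + r) ν) with hσ
  have hc : ν.card = n + r := card_padDiagram lam (n + r) h
  have hlt : r + ν.rowLen 0 < ν.card := by
    rw [hc, hν, rowLen_padDiagram]
    omega
  refine Submodule.Quotient.subsingleton_iff.mpr ?_
  rw [Submodule.eq_top_iff']
  intro v
  have hcard : ((Fintype.card (Equiv.Perm (Fin n)) : K)) ≠ 0 := by
    exact_mod_cast Nat.cast_ne_zero.mpr Fintype.card_ne_zero
  set avg : F.W ν := (Fintype.card (Equiv.Perm (Fin n)) : K)⁻¹ •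
    ∑ g : Equiv.Perm (Fin n), σ g v with havg
  have hinvavg : ∀ h0 : Equiv.Perm (Fin n), σ h0 avg = avg := by
    intro h0
    rw [havg, map_smul, map_sum]
    congr 1
    refine Fintype.sum_equiv (Equiv.mulLeft h0) _ _ ?_
    intro g
    have : σ h0 (σ g v) = σ (h0 * g) v := by rw [map_mul]; rfl
    rw [this]
    simp
  have havg0 : avg = 0 := no_invariants F r n ν hc hlt avg hinvavg
  have hsum0 : (∑ g : Equiv.Perm (Fin n), σ g v) = 0 := by
    rcases smul_eq_zero.mp (havg ▸ havg0) with h1 | h1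
    · exact absurd h1 (inv_ne_zero hcard)
    · exact h1
  have hsummem : (∑ g : Equiv.Perm (Fin n), (σ g v - v)) ∈ coinvariantsKer σ :=
    Submodule.sum_mem _ fun g _ => Submodule.subset_span ⟨g, v, rfl⟩
  have heq : (∑ g : Equiv.Perm (Fin n), (σ g v - v))
      = -(((Fintype.card (Equiv.Perm (Fin n)) : K)) • v) := by
    rw [Finset.sum_sub_distrib, hsum0, Finset.sum_const, Finset.card_univ, zero_sub,
      ← Nat.cast_smul_eq_nsmul K]
  have hmem2 : ((Fintype.card (Equiv.Perm (Fin n)) : K)) • v ∈ coinvariantsKer σ := by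
    have h2 := Submodule.neg_mem _ hsummem
    rwa [heq, neg_neg] at h2
  have hv : v = (Fintype.card (Equiv.Perm (Fin n)) : K)⁻¹ •
      (((Fintype.card (Equiv.Perm (Fin n)) : K)) • v) := by
    rw [smul_smul, inv_mul_cancel₀ hcard, one_smul]
  rw [hv]
  exact Submodule.smul_mem _ _ hmem2
end

section
/- Let X be a connected finite quandle and suppose, as in Shusterman's theorem, that there is N_X such that for all n ≥ N_X and all tuples (x_1,…,x_n) ∈ X^n generating X as a quandle, the pure braid group orbit equals the braid group orbit. Let (G,c) have the non-splitting property. Then there exists N_c such that for all n ≥ N_c, the natural surjection c^n / PBr_n → c^n / Br_n is a bijection. -/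
open scoped Quandles

section HurwitzMoves

variable {Q : Type*} [Rack Q]

/-- The labelled Hurwitz move of the `j`-th Artin braid generator, acting on tuples of
quandle elements together with strand labels: `(x_j, x_{j+1}) ↦ (x_j ◃ x_{j+1}, x_j)`,
the labels moving along with the strands. -/
def rackMove (j : ℕ) (v : ℕ → Q × ℕ) : ℕ → Q × ℕ :=
  fun i => if i = j then ((v j).1 ◃ (v (j + 1)).1, (v (j + 1)).2)
    else if i = j + 1 then v j else v i

/-- The labelled Hurwitz move of the inverse of the `j`-th Artin generator:
`(x_j, x_{j+1}) ↦ (x_{j+1}, x_{j+1} ◃⁻¹ x_j)`. -/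
def rackMoveInv (j : ℕ) (v : ℕ → Q × ℕ) : ℕ → Q × ℕ :=
  fun i => if i = j then v (j + 1)
    else if i = j + 1 then ((v (j + 1)).1 ◃⁻¹ (v j).1, (v j).2) else v i

/-- One labelled Hurwitz move (a braid generator or its inverse) on `n`-tuples. -/
def RackStep (n : ℕ) (v w : ℕ → Q × ℕ) : Prop :=
  ∃ j, j + 1 < n ∧ (w = rackMove j v ∨ w = rackMoveInv j v)

/-- Labelled Hurwitz reachability: the reflexive-transitive closure of the moves. -/
def RackReach (n : ℕ) : (ℕ → Q × ℕ) → (ℕ → Q × ℕ) → Prop :=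
  Relation.ReflTransGen (RackStep n)

/-- The tautological labelling of a tuple. -/
def labelled (v : ℕ → Q) : ℕ → Q × ℕ := fun i => (v i, i)

/-- `v` and `w` lie in the same `Br_n`-orbit of the Hurwitz action on `Q^n`. -/
def BraidReach (n : ℕ) (v w : ℕ → Q) : Prop :=
  ∃ w2 : ℕ → Q × ℕ, RackReach n (labelled v) w2 ∧ ∀ i, i < n → (w2 i).1 = w i

/-- `v` and `w` lie in the same `PBr_n`-orbit of the Hurwitz action on `Q^n`: they are
connected by a sequence of moves inducing the trivial permutation of the strand labels. -/
def PureBraidReach (n : ℕ) (v w : ℕ → Q) : Prop :=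
  ∃ w2 : ℕ → Q × ℕ, RackReach n (labelled v) w2 ∧ ∀ i, i < n → w2 i = (w i, i)

/-- A tuple generates `Q` as a quandle: every subset of `Q` containing its entries and closed
under the quandle operations `◃` and `◃⁻¹` is all of `Q`. -/
def TupleGenerates (n : ℕ) (v : ℕ → Q) : Prop :=
  ∀ S : Set Q, (∀ i, i < n → v i ∈ S) →
    (∀ x ∈ S, ∀ y ∈ S, x ◃ y ∈ S ∧ x ◃⁻¹ y ∈ S) → ∀ x : Q, x ∈ S

/-- A quandle is connected if its Schreier graph (with edges `(x, y ◃ x)`) is connected. -/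
def QuandleConnected (Q' : Type*) [Rack Q'] : Prop :=
  ∀ x y : Q', Relation.ReflTransGen (fun a b => ∃ z : Q', b = z ◃ a ∨ b = z ◃⁻¹ a) x y

end HurwitzMoves

/-- The non-splitting property for `(G, c)`. -/
def NonSplitting {G : Type*} [Group G] (c : Set G) : Prop :=
  Subgroup.closure c = ⊤ ∧
    ∀ H : Subgroup G, (c ∩ (H : Set G)).Nonempty →
      (∀ x ∈ c ∩ (H : Set G), ∀ h ∈ H, h * x * h⁻¹ ∈ c ∩ (H : Set G)) ∧
      (∀ x ∈ c ∩ (H : Set G), ∀ y ∈ c ∩ (H : Set G), ∃ h ∈ H, y = h * x * h⁻¹)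

section Aux

open Quandles

/-- Transfer of labelled Hurwitz reachability along a relation compatible with the rack
operations. -/
lemma rackReach_transfer {Q1 Q2 : Type*} [Rack Q1] [Rack Q2] (n : ℕ) (R : Q1 → Q2 → Prop)
    (hR1 : ∀ x x' y y', R x x' → R y y' → R (x ◃ y) (x' ◃ y'))
    (hR2 : ∀ x x' y y', R x x' → R y y' → R (x ◃⁻¹ y) (x' ◃⁻¹ y'))
    (a : ℕ → Q1 × ℕ) (a2 : ℕ → Q2 × ℕ)
    (ha : ∀ i, i < n → R (a i).1 (a2 i).1 ∧ (a i).2 = (a2 i).2) :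
    ∀ b, RackReach n a b → ∃ b2, RackReach n a2 b2 ∧
      ∀ i, i < n → R (b i).1 (b2 i).1 ∧ (b i).2 = (b2 i).2 := by
  intro b hb
  induction hb with
  | refl => exact ⟨a2, Relation.ReflTransGen.refl, ha⟩
  | tail hab hbc ih =>
    obtain ⟨b2, hb2, hrel⟩ := ih
    obtain ⟨j, hj, hor⟩ := hbc
    have hj' : j < n := Nat.lt_of_succ_lt hj
    rcases hor with h | h
    · refine ⟨rackMove j b2, hb2.tail ⟨j, hj, Or.inl rfl⟩, ?_⟩
      intro i hi
      subst h
      by_cases h1 : i = j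
      · simp only [rackMove, if_pos h1]
        exact ⟨hR1 _ _ _ _ (hrel j hj').1 (hrel (j+1) hj).1, (hrel (j+1) hj).2⟩
      · by_cases h2 : i = j + 1
        · simp only [rackMove, if_neg h1, if_pos h2]
          exact hrel j hj'
        · simp only [rackMove, if_neg h1, if_neg h2]
          exact hrel i hi
    · refine ⟨rackMoveInv j b2, hb2.tail ⟨j, hj, Or.inr rfl⟩, ?_⟩
      intro i hi
      subst h
      by_cases h1 : i = j
      · simp only [rackMoveInv, if_pos h1]
        exact hrel (j+1) hj
      · by_cases h2 : i = j + 1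
        · simp only [rackMoveInv, if_neg h1, if_pos h2]
          exact ⟨hR2 _ _ _ _ (hrel (j+1) hj).1 (hrel j hj').1, (hrel j hj').2⟩
        · simp only [rackMoveInv, if_neg h1, if_neg h2]
          exact hrel i hi

/-- A subset of a group closed under conjugation and inverse conjugation by its elements. -/
def ConjClosed {G : Type*} [Group G] (S : Set G) : Prop :=
  ∀ x ∈ S, ∀ y ∈ S, x * y * x⁻¹ ∈ S ∧ x⁻¹ * y * x ∈ S

/-- The conjugation quandle structure on a conjugation-closed subset of a group. -/
def subConjQuandle {G : Type*} [Group G] (S : Set G) (hS : ConjClosed S) : Quandle ↥S where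
  act x y := ⟨(x : G) * y * (x : G)⁻¹, (hS x x.2 y y.2).1⟩
  self_distrib := by
    intro x y z
    apply Subtype.ext
    show (x : G) * ((y : G) * z * (y : G)⁻¹) * (x : G)⁻¹ =
      ((x : G) * y * (x : G)⁻¹) * ((x : G) * z * (x : G)⁻¹) * ((x : G) * y * (x : G)⁻¹)⁻¹
    group
  invAct x y := ⟨(x : G)⁻¹ * y * (x : G), (hS x x.2 y y.2).2⟩
  left_inv := by
    intro x y
    apply Subtype.ext
    show (x : G)⁻¹ * ((x : G) * y * (x : G)⁻¹) * (x : G) = (y : G)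
    group
  right_inv := by
    intro x y
    apply Subtype.ext
    show (x : G) * ((x : G)⁻¹ * y * (x : G)) * (x : G)⁻¹ = (y : G)
    group
  fix := by
    intro x
    apply Subtype.ext
    show (x : G) * x * (x : G)⁻¹ = (x : G)
    group

end Aux

/-- Suppose (as in Shusterman's theorem) that for every connected finite
quandle `X` there is `N_X` such that for all `n ≥ N_X` and all tuples in `X^n` generating `X`
as a quandle, the pure braid group orbit equals the braid group orbit.  Let `G` be a finite
group and `c` a conjugacy class with the non-splitting property.  Then there exists `N_c` such
that for all `n ≥ N_c` the natural surjection `c^n / PBr_n → c^n / Br_n` is a bijection, i.e.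
tuples in `c^n` in the same braid orbit are already in the same pure braid orbit. -/
theorem pure_braid_orbits_eq_braid_orbits
    (hShu : ∀ (X : Type) [Fintype X] [Quandle X], QuandleConnected X →
      ∃ NX : ℕ, ∀ n, NX ≤ n → ∀ v w : ℕ → X, TupleGenerates n v →
        BraidReach n v w → PureBraidReach n v w)
    (G : Type) [Group G] [Fintype G] (c : Set G)
    (hc_ne : c.Nonempty)
    (hc_conj : ∀ x ∈ c, ∀ h : G, h * x * h⁻¹ ∈ c)
    (hc_class : ∀ x ∈ c, ∀ y ∈ c, IsConj x y)
    (hns : NonSplitting c) :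
    ∃ Nc : ℕ, ∀ n, Nc ≤ n → ∀ v w : ℕ → Quandle.Conj G,
      (∀ i, i < n → v i ∈ c) → (∀ i, i < n → w i ∈ c) →
      BraidReach n v w → PureBraidReach n v w := by
  classical
  have key : ∀ H : Subgroup G, ∃ N : ℕ, ∀ n, N ≤ n → ∀ v w : ℕ → Quandle.Conj G,
      (∀ i, i < n → v i ∈ c) → (∀ i, i < n → w i ∈ c) →
      Subgroup.closure (v '' Set.Iio n) = H →
      BraidReach n v w → PureBraidReach n v w := by
    intro H
    by_cases hgood : (c ∩ (H : Set G)).Nonempty ∧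
        Subgroup.closure (c ∩ (H : Set G)) = H
    · -- the interesting case
      obtain ⟨hne, hclS⟩ := hgood
      set S : Set G := c ∩ (H : Set G) with hSdef
      have hconj_H : ∀ x ∈ S, ∀ h ∈ H, h * x * h⁻¹ ∈ S := (hns.2 H hne).1
      have htrans : ∀ x ∈ S, ∀ y ∈ S, ∃ h ∈ H, y = h * x * h⁻¹ := (hns.2 H hne).2
      have hcl : ConjClosed S := by
        intro x hx y hy
        refine ⟨hconj_H y hy x hx.2, ?_⟩
        have := hconj_H y hy x⁻¹ (inv_mem hx.2)
        simpa using this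
      letI instQ : Quandle ↥S := subConjQuandle S hcl
      letI instF : Fintype ↥S := Set.Finite.fintype (Set.toFinite S)
      have act_val : ∀ x y : ↥S, ((x ◃ y : ↥S) : G) = (x : G) * y * (x : G)⁻¹ :=
        fun x y => rfl
      have invAct_val : ∀ x y : ↥S, ((x ◃⁻¹ y : ↥S) : G) = (x : G)⁻¹ * y * (x : G) :=
        fun x y => rfl
      -- the sub-quandle is connected
      have hconn : QuandleConnected ↥S := by
        have hsym : Symmetric (fun a b : ↥S => ∃ z : ↥S, b = z ◃ a ∨ b = z ◃⁻¹ a) := by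
          rintro a b ⟨z, h | h⟩
          · exact ⟨z, Or.inr (by rw [h]; exact (Rack.left_inv z a).symm)⟩
          · exact ⟨z, Or.inl (by rw [h]; exact (Rack.right_inv z a).symm)⟩
        have hsymR : ∀ {a b : ↥S},
            Relation.ReflTransGen (fun a b : ↥S => ∃ z : ↥S, b = z ◃ a ∨ b = z ◃⁻¹ a) a b →
            Relation.ReflTransGen (fun a b : ↥S => ∃ z : ↥S, b = z ◃ a ∨ b = z ◃⁻¹ a) b a :=
          fun h => (@Relation.ReflTransGen.stdSymm _ _ ⟨fun _ _ h => hsym h⟩).symm _ _ h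
        have main : ∀ g ∈ Subgroup.closure S, ∀ x y : ↥S, (y : G) = g * x * g⁻¹ →
            Relation.ReflTransGen (fun a b : ↥S => ∃ z : ↥S, b = z ◃ a ∨ b = z ◃⁻¹ a) x y := by
          intro g hg
          induction hg using Subgroup.closure_induction with
          | mem g hgS =>
            intro x y hy
            refine Relation.ReflTransGen.single ⟨⟨g, hgS⟩, Or.inl ?_⟩
            apply Subtype.ext
            rw [hy, act_val]
          | one =>
            intro x y hy
            have : y = x := Subtype.ext (by simpa using hy)
            rw [this]
          | mul g1 g2 hg1 hg2 ih1 ih2 =>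
            intro x y hy
            have hg2H : g2 ∈ H := by rw [← hclS]; exact hg2
            have hmidS : g2 * (x : G) * g2⁻¹ ∈ S := hconj_H (x : G) x.2 g2 hg2H
            refine Relation.ReflTransGen.trans (ih2 x ⟨_, hmidS⟩ rfl) (ih1 _ y ?_)
            rw [hy]
            group
          | inv g hg ih =>
            intro x y hy
            refine hsymR (ih y x ?_)
            rw [hy]
            group
        intro x y
        obtain ⟨h, hH, heq⟩ := htrans (x : G) x.2 (y : G) y.2
        exact main h (by rw [hclS]; exact hH) x y heq
      obtain ⟨NX, hNX⟩ := hShu ↥S hconn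
      refine ⟨NX + 1, ?_⟩
      intro n hn v w hv hw hclos hbw
      have hn0 : 0 < n := lt_of_lt_of_le (Nat.succ_pos NX) hn
      have hvS : ∀ i, i < n → v i ∈ S := fun i hi =>
        ⟨hv i hi, by rw [← hclos]; exact Subgroup.subset_closure ⟨i, hi, rfl⟩⟩
      set v' : ℕ → ↥S :=
        fun i => if h : i < n then ⟨v i, hvS i h⟩ else ⟨hne.choose, hne.choose_spec⟩
        with hv'def
      have hv'val : ∀ i, i < n → ((v' i : G)) = v i := by
        intro i hi
        rw [hv'def]
        simp only [dif_pos hi]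
      obtain ⟨w2, hw2r, hw2⟩ := hbw
      -- lift the chain to the subquandle
      obtain ⟨w2', hw2'r, hw2'rel⟩ := rackReach_transfer n
        (fun (x : Quandle.Conj G) (x' : ↥S) => (x' : G) = x)
        (fun x x' y y' hx hy => by
          show ((x' ◃ y' : ↥S) : G) = x ◃ y
          rw [act_val, hx, hy, Quandle.conj_act_eq_conj])
        (fun x x' y y' hx hy => by
          show ((x' ◃⁻¹ y' : ↥S) : G) = x ◃⁻¹ y
          rw [invAct_val, hx, hy]; rfl)
        (labelled v) (labelled v')
        (fun i hi => ⟨hv'val i hi, rfl⟩) w2 hw2r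
      -- the lifted tuple generates the subquandle
      have hgen : TupleGenerates n v' := by
        intro S' hS'mem hS'cl
        have main : ∀ g ∈ Subgroup.closure (v '' Set.Iio n),
            (∀ x, x ∈ S' → ∀ y : ↥S, (y : G) = g * x * g⁻¹ → y ∈ S') ∧
            (∀ x, x ∈ S' → ∀ y : ↥S, (y : G) = g⁻¹ * x * g → y ∈ S') := by
          intro g hg
          induction hg using Subgroup.closure_induction with
          | mem g hgS =>
            obtain ⟨i, hi, rfl⟩ := hgS
            have hi' : i < n := hi
            constructor
            · intro x hx y hy
              have : y = v' i ◃ x := Subtype.ext (by rw [hy, act_val, hv'val i hi'])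
              rw [this]
              exact (hS'cl (v' i) (hS'mem i hi') x hx).1
            · intro x hx y hy
              have : y = v' i ◃⁻¹ x := Subtype.ext (by rw [hy, invAct_val, hv'val i hi'])
              rw [this]
              exact (hS'cl (v' i) (hS'mem i hi') x hx).2
          | one =>
            constructor <;> intro x hx y hy <;>
              · have : y = x := Subtype.ext (by simpa using hy)
                rwa [this]
          | mul g1 g2 hg1 hg2 ih1 ih2 =>
            have hg1H : g1 ∈ H := by rw [← hclos]; exact hg1
            have hg2H : g2 ∈ H := by rw [← hclos]; exact hg2
            constructor
            · intro x hx y hy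
              have hmid : g2 * (x : G) * g2⁻¹ ∈ S := hconj_H (x : G) x.2 g2 hg2H
              exact ih1.1 ⟨_, hmid⟩ (ih2.1 x hx ⟨_, hmid⟩ rfl) y (by rw [hy]; group)
            · intro x hx y hy
              have hmid : g1⁻¹ * (x : G) * g1 ∈ S := by
                have := hconj_H (x : G) x.2 g1⁻¹ (inv_mem hg1H)
                simpa using this
              exact ih2.2 ⟨_, hmid⟩ (ih1.2 x hx ⟨_, hmid⟩ rfl) y (by rw [hy]; group)
          | inv g hg ih =>
            constructor
            · intro x hx y hy
              exact ih.2 x hx y (by rw [hy]; group)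
            · intro x hx y hy
              exact ih.1 x hx y (by rw [hy]; group)
        intro x
        obtain ⟨h, hH, heq⟩ := htrans (v 0) (hvS 0 hn0) (x : G) x.2
        refine (main h (by rw [hclos]; exact hH)).1 (v' 0) (hS'mem 0 hn0) x ?_
        rw [heq, hv'val 0 hn0]
      -- apply Shusterman upstairs
      obtain ⟨w2'', hw2''r, hw2''⟩ := hNX n (Nat.le_of_succ_le hn) v'
        (fun i => (w2' i).1) hgen ⟨w2', hw2'r, fun i hi => rfl⟩
      -- push the pure chain back down
      obtain ⟨w3, hw3r, hw3rel⟩ := rackReach_transfer n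
        (fun (x : ↥S) (x' : Quandle.Conj G) => x' = (x : G))
        (fun x x' y y' hx hy => by
          show (x' ◃ y' : Quandle.Conj G) = ((x ◃ y : ↥S) : G)
          rw [hx, hy, Quandle.conj_act_eq_conj]; exact (act_val x y).symm)
        (fun x x' y y' hx hy => by
          show (x' ◃⁻¹ y' : Quandle.Conj G) = ((x ◃⁻¹ y : ↥S) : G)
          rw [hx, hy, invAct_val]; rfl)
        (labelled v') (labelled v)
        (fun i hi => ⟨(hv'val i hi).symm, rfl⟩) w2'' hw2''r
      refine ⟨w3, hw3r, ?_⟩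
      intro i hi
      have h1 := hw3rel i hi
      have h2 := hw2'' i hi
      have h3 := hw2'rel i hi
      have hfst : (w3 i).1 = w i := by
        rw [h1.1, h2]
        exact h3.1.trans (hw2 i hi)
      have hsnd : (w3 i).2 = i := by
        rw [← h1.2, h2]
      exact Prod.ext hfst hsnd
    · -- degenerate case: the hypotheses cannot all hold
      refine ⟨1, ?_⟩
      intro n hn v w hv hw hclos hbw
      exfalso
      apply hgood
      have h0mem : v 0 ∈ Subgroup.closure (v '' Set.Iio n) :=
        Subgroup.subset_closure ⟨0, by simpa using Nat.lt_of_lt_of_le Nat.zero_lt_one hn, rfl⟩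
      have h0 : v 0 ∈ c ∩ (H : Set G) :=
        ⟨hv 0 (Nat.lt_of_lt_of_le Nat.zero_lt_one hn), by rw [← hclos]; exact h0mem⟩
      refine ⟨⟨v 0, h0⟩, ?_⟩
      apply le_antisymm
      · exact (Subgroup.closure_le H).2 fun x hx => hx.2
      · conv_lhs => rw [← hclos]
        refine Subgroup.closure_mono ?_
        rintro x ⟨i, hi, rfl⟩
        exact ⟨hv i hi, by rw [← hclos]; exact Subgroup.subset_closure ⟨i, hi, rfl⟩⟩
  choose N hN using key
  have hfin : (Set.range N).Finite := Set.finite_range N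
  obtain ⟨Nc, hNc⟩ := hfin.bddAbove
  refine ⟨Nc, ?_⟩
  intro n hn v w hv hw hbw
  exact hN _ n (le_trans (hNc ⟨_, rfl⟩) hn) v w hv hw rfl hbw
end
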